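/- Let U ∈ ℝ^{n×d} satisfy: its first column is (1/√n)1_n, max_{i,j} |U_{ij}| ≤ 1/√(n-2d), and let Λ = diag(n/2, n/(12d), ..., n/(12d)). Set X = U Λ^{1/2} and let x_i denote the rows of X. Then for any signature matrix I_{p,q} (p+q=d, with +1 in the first coordinate) and all n ≥ 4d and all i, j: 1/3 ≤ x_iᵀ I_{p,q} x_j ≤ 2/3. -/

import Mathlib

/-- For `U ∈ ℝ^{n×d}` with first column `(1/√n)1`, entrywise bound
`|U_{ij}| ≤ 1/√(n-2d)`, and `Λ = diag(n/2, n/(12d), ..., n/(12d))`, the rows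
`x_i` of `X = UΛ^{1/2}` satisfy `1/3 ≤ x_iᵀ I_{p,q} x_j ≤ 2/3` for all `i, j`,
whenever `n ≥ 4d` and the first signature entry is `+1`. -/
theorem stmt_17 {n d : ℕ} (hd : 0 < d) (hn : 4 * d ≤ n)
    (U : Matrix (Fin n) (Fin d) ℝ)
    (hcol : ∀ i, U i ⟨0, hd⟩ = 1 / Real.sqrt n)
    (hbound : ∀ i j, |U i j| ≤ 1 / Real.sqrt ((n : ℝ) - 2 * d))
    (ω : Fin d → ℝ) (hω1 : ω ⟨0, hd⟩ = 1) (hω : ∀ j, ω j = 1 ∨ ω j = -1) :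
    ∀ i j : Fin n,
      (1 / 3 : ℝ) ≤ ∑ ℓ : Fin d,
          ω ℓ * (if ℓ = ⟨0, hd⟩ then (n : ℝ) / 2 else (n : ℝ) / (12 * d)) * U i ℓ * U j ℓ ∧
      (∑ ℓ : Fin d,
          ω ℓ * (if ℓ = ⟨0, hd⟩ then (n : ℝ) / 2 else (n : ℝ) / (12 * d)) * U i ℓ * U j ℓ)
        ≤ 2 / 3 := by
  intro i j
  set z : Fin d := ⟨0, hd⟩ with hz
  have hd1 : (1 : ℝ) ≤ d := by exact_mod_cast hd
  have hn4 : (4 : ℝ) * d ≤ n := by exact_mod_cast hn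
  have hnpos : (0 : ℝ) < n := by nlinarith
  have hmpos : (0 : ℝ) < (n : ℝ) - 2 * d := by nlinarith
  set f : Fin d → ℝ :=
    fun ℓ => ω ℓ * (if ℓ = z then (n : ℝ) / 2 else (n : ℝ) / (12 * d)) * U i ℓ * U j ℓ with hf
  have hsplit : ∑ ℓ, f ℓ = f z + ∑ ℓ ∈ Finset.univ.erase z, f ℓ :=
    (Finset.add_sum_erase _ f (Finset.mem_univ z)).symm
  have hterm0 : f z = 1 / 2 := by
    have hs : Real.sqrt n * Real.sqrt n = n := Real.mul_self_sqrt hnpos.le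
    simp only [hf, if_pos rfl, ↓reduceIte, hω1, hcol i, hcol j]
    field_simp
    nlinarith [hs, Real.sqrt_pos.mpr hnpos]
  have habs : |∑ ℓ ∈ Finset.univ.erase z, f ℓ| ≤ 1 / 6 := by
    have hsm : Real.sqrt ((n : ℝ) - 2 * d) * Real.sqrt ((n : ℝ) - 2 * d) = (n : ℝ) - 2 * d :=
      Real.mul_self_sqrt hmpos.le
    have hsp : 0 < Real.sqrt ((n : ℝ) - 2 * d) := Real.sqrt_pos.mpr hmpos
    calc |∑ ℓ ∈ Finset.univ.erase z, f ℓ|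
        ≤ ∑ ℓ ∈ Finset.univ.erase z, |f ℓ| := Finset.abs_sum_le_sum_abs _ _
      _ ≤ ∑ ℓ ∈ Finset.univ.erase z, (n : ℝ) / (12 * d) * (1 / ((n : ℝ) - 2 * d)) := by
          apply Finset.sum_le_sum
          intro ℓ hℓ
          have hne : ℓ ≠ z := Finset.ne_of_mem_erase hℓ
          have hωabs : |ω ℓ| = 1 := by rcases hω ℓ with h | h <;> simp [h]
          have hc : (0:ℝ) ≤ (n : ℝ) / (12 * d) := by positivity
          rw [hf]
          simp only [if_neg hne]
          rw [abs_mul, abs_mul, abs_mul, hωabs, one_mul, abs_of_nonneg hc]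
          have h1 := hbound i ℓ
          have h2 := hbound j ℓ
          have hinv : (1 : ℝ) / Real.sqrt ((n : ℝ) - 2 * d) * (1 / Real.sqrt ((n : ℝ) - 2 * d))
              = 1 / ((n : ℝ) - 2 * d) := by
            rw [div_mul_div_comm, one_mul, hsm]
          calc (n : ℝ) / (12 * d) * |U i ℓ| * |U j ℓ|
              ≤ (n : ℝ) / (12 * d) * (1 / Real.sqrt ((n : ℝ) - 2 * d))
                * (1 / Real.sqrt ((n : ℝ) - 2 * d)) := by
                gcongr <;> first | exact abs_nonneg _ | exact h1 | exact h2
            _ = (n : ℝ) / (12 * d) * (1 / ((n : ℝ) - 2 * d)) := by rw [mul_assoc, hinv]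
      _ = ((d : ℝ) - 1) * ((n : ℝ) / (12 * d) * (1 / ((n : ℝ) - 2 * d))) := by
          rw [Finset.sum_const, Finset.card_erase_of_mem (Finset.mem_univ z),
            Finset.card_univ, Fintype.card_fin, nsmul_eq_mul, Nat.cast_sub hd]
          norm_num
      _ ≤ 1 / 6 := by
          rw [show ((d : ℝ) - 1) * ((n : ℝ) / (12 * d) * (1 / ((n : ℝ) - 2 * d)))
              = ((d : ℝ) - 1) * n / (12 * d * ((n : ℝ) - 2 * d)) by
            field_simp]
          rw [div_le_iff₀ (by nlinarith)]
          nlinarith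
  rw [hsplit, hterm0]
  rcases abs_le.mp habs with ⟨h1, h2⟩
  constructor <;> linarith
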